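/- Let S be a finite set with n elements and suppose (A_{j1}, ..., A_{jp}) for j = 1, ..., m are m distinct weak compositions of S into p parts such that for every k ∈ {1,...,p} the set of distinct values {A_{jk} : 1 ≤ j ≤ m} is an antichain. Then the sum over j = 1, ..., m of 1/(n!/(|A_{j1}|!···|A_{jp}|!)) is at most 1. -/
import Mathlib

open Finset

set_option linter.unusedSectionVars false
namespace HochbergHirschAux

variable {α : Type*} [Fintype α] [DecidableEq α] {p : ℕ}

/-- Prefix sums of part sizes of a weak composition. -/
def S (B : Fin p → Finset α) (k : Fin p) : ℕ :=
  ∑ l ∈ Finset.univ.filter (fun l : Fin p => l < k), (B l).card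

/-- The bijections `α ≃ Fin n` compatible with the composition `B`. -/
def Good (B : Fin p → Finset α) : Finset (α ≃ Fin (Fintype.card α)) :=
  Finset.univ.filter (fun τ => ∀ k : Fin p, ∀ a ∈ B k,
    S B k ≤ (τ a : ℕ) ∧ (τ a : ℕ) < S B k + (B k).card)

lemma S_mono (B : Fin p → Finset α) {k k' : Fin p} (h : k < k') :
    S B k + (B k).card ≤ S B k' := by
  have hns : k ∉ Finset.univ.filter (fun l : Fin p => l < k) := by simp
  have hins : insert k (Finset.univ.filter (fun l : Fin p => l < k)) ⊆
      Finset.univ.filter (fun l : Fin p => l < k') := by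
    intro l hl
    simp only [Finset.mem_insert, Finset.mem_filter, Finset.mem_univ, true_and] at hl ⊢
    rcases hl with rfl | hl
    · exact h
    · exact hl.trans h
  calc S B k + (B k).card
      = ∑ l ∈ insert k (Finset.univ.filter (fun l : Fin p => l < k)), (B l).card := by
        rw [Finset.sum_insert hns, S]; ring
    _ ≤ _ := Finset.sum_le_sum_of_subset hins

lemma S_add_card_le (B : Fin p → Finset α)
    (hsum : ∑ l, (B l).card = Fintype.card α) (k : Fin p) :
    S B k + (B k).card ≤ Fintype.card α := by
  have hns : k ∉ Finset.univ.filter (fun l : Fin p => l < k) := by simp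
  calc S B k + (B k).card
      = ∑ l ∈ insert k (Finset.univ.filter (fun l : Fin p => l < k)), (B l).card := by
        rw [Finset.sum_insert hns, S]; ring
    _ ≤ ∑ l, (B l).card := Finset.sum_le_sum_of_subset (Finset.subset_univ _)
    _ = _ := hsum

variable {B : Fin p → Finset α}

/-- The index of the part containing `a`. -/
noncomputable def pidx (hu : ∀ a : α, ∃! k, a ∈ B k) (a : α) : Fin p :=
  Fintype.choose _ (hu a)

lemma pidx_mem (hu : ∀ a : α, ∃! k, a ∈ B k) (a : α) : a ∈ B (pidx hu a) :=
  Fintype.choose_spec _ (hu a)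

lemma pidx_eq (hu : ∀ a : α, ∃! k, a ∈ B k) {a : α} {k : Fin p} (h : a ∈ B k) :
    pidx hu a = k :=
  (hu a).unique (pidx_mem hu a) h

noncomputable def phiFun (hu : ∀ a : α, ∃! k, a ∈ B k)
    (hsum : ∑ l, (B l).card = Fintype.card α)
    (e : ∀ k : Fin p, {x // x ∈ B k} ≃ Fin (B k).card) (a : α) :
    Fin (Fintype.card α) :=
  ⟨S B (pidx hu a) + (e (pidx hu a) ⟨a, pidx_mem hu a⟩ : ℕ), by
    have h1 : ((e (pidx hu a) ⟨a, pidx_mem hu a⟩ : Fin _) : ℕ) < (B (pidx hu a)).card :=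
      Fin.is_lt _
    have h2 := S_add_card_le B hsum (pidx hu a)
    omega⟩

lemma phiFun_spec (hu : ∀ a : α, ∃! k, a ∈ B k)
    (hsum : ∑ l, (B l).card = Fintype.card α)
    (e : ∀ k : Fin p, {x // x ∈ B k} ≃ Fin (B k).card) (a : α) (k : Fin p)
    (h : a ∈ B k) :
    (phiFun hu hsum e a : ℕ) = S B k + (e k ⟨a, h⟩ : ℕ) := by
  have hk := pidx_eq hu h
  subst hk
  rfl

lemma phiFun_inj (hu : ∀ a : α, ∃! k, a ∈ B k)
    (hsum : ∑ l, (B l).card = Fintype.card α)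
    (e : ∀ k : Fin p, {x // x ∈ B k} ≃ Fin (B k).card) :
    Function.Injective (phiFun hu hsum e) := by
  intro a b hab
  have ha := pidx_mem hu a
  have hb := pidx_mem hu b
  have hval : S B (pidx hu a) + (e (pidx hu a) ⟨a, ha⟩ : ℕ)
      = S B (pidx hu b) + (e (pidx hu b) ⟨b, hb⟩ : ℕ) := congrArg Fin.val hab
  have h1 : (e (pidx hu a) ⟨a, ha⟩ : ℕ) < (B (pidx hu a)).card := Fin.is_lt _
  have h2 : (e (pidx hu b) ⟨b, hb⟩ : ℕ) < (B (pidx hu b)).card := Fin.is_lt _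
  have hkk : pidx hu a = pidx hu b := by
    by_contra hne
    rcases lt_or_gt_of_ne hne with h | h
    · have := S_mono B h; omega
    · have := S_mono B h; omega
  have ha' : a ∈ B (pidx hu b) := hkk ▸ ha
  have s1 := phiFun_spec hu hsum e a (pidx hu b) ha'
  have s2 := phiFun_spec hu hsum e b (pidx hu b) hb
  have s3 := phiFun_spec hu hsum e a (pidx hu a) ha
  have hval2 : (e (pidx hu b) ⟨a, ha'⟩ : ℕ) = (e (pidx hu b) ⟨b, hb⟩ : ℕ) := by
    have hq : (phiFun hu hsum e a : ℕ) = (phiFun hu hsum e b : ℕ) := congrArg Fin.val hab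
    omega
  have := (e (pidx hu b)).injective (Fin.ext hval2)
  exact congrArg Subtype.val this

noncomputable def phi (hu : ∀ a : α, ∃! k, a ∈ B k)
    (hsum : ∑ l, (B l).card = Fintype.card α)
    (e : ∀ k : Fin p, {x // x ∈ B k} ≃ Fin (B k).card) :
    α ≃ Fin (Fintype.card α) :=
  Equiv.ofBijective (phiFun hu hsum e)
    ((Fintype.bijective_iff_injective_and_card _).2 ⟨phiFun_inj hu hsum e, by simp⟩)

lemma phi_mem_good (hu : ∀ a : α, ∃! k, a ∈ B k)
    (hsum : ∑ l, (B l).card = Fintype.card α)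
    (e : ∀ k : Fin p, {x // x ∈ B k} ≃ Fin (B k).card) :
    phi hu hsum e ∈ Good B := by
  simp only [Good, Finset.mem_filter, Finset.mem_univ, true_and]
  intro k a h
  have hs : ((phi hu hsum e) a : ℕ) = S B k + (e k ⟨a, h⟩ : ℕ) :=
    phiFun_spec hu hsum e a k h
  have : (e k ⟨a, h⟩ : ℕ) < (B k).card := Fin.is_lt _
  omega

lemma phi_inj (hu : ∀ a : α, ∃! k, a ∈ B k)
    (hsum : ∑ l, (B l).card = Fintype.card α) :
    Function.Injective (phi hu hsum) := by
  intro e e' h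
  funext k
  apply Equiv.ext
  intro x
  have h1 : ((phi hu hsum e) (x : α) : ℕ) = ((phi hu hsum e') (x : α) : ℕ) := by rw [h]
  have h2 := phiFun_spec hu hsum e (x : α) k x.2
  have h3 := phiFun_spec hu hsum e' (x : α) k x.2
  apply Fin.ext
  have hx : (⟨(x : α), x.2⟩ : {y // y ∈ B k}) = x := rfl
  rw [hx] at h2 h3
  change (phiFun hu hsum e (x:α) : ℕ) = (phiFun hu hsum e' (x:α) : ℕ) at h1
  omega

lemma good_in_range (hu : ∀ a : α, ∃! k, a ∈ B k)
    (hsum : ∑ l, (B l).card = Fintype.card α)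
    {τ : α ≃ Fin (Fintype.card α)} (hτ : τ ∈ Good B) :
    ∃ e, phi hu hsum e = τ := by
  simp only [Good, Finset.mem_filter, Finset.mem_univ, true_and] at hτ
  have gdef : ∀ k : Fin p, ∀ x : {y // y ∈ B k}, (τ (x : α) : ℕ) - S B k < (B k).card := by
    intro k x
    have := hτ k x x.2
    omega
  let g : ∀ k : Fin p, {y // y ∈ B k} → Fin (B k).card :=
    fun k x => ⟨(τ (x : α) : ℕ) - S B k, gdef k x⟩
  have ginj : ∀ k, Function.Injective (g k) := by
    intro k x y hxy
    have hx := hτ k x x.2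
    have hy := hτ k y y.2
    have hval : (τ (x : α) : ℕ) - S B k = (τ (y : α) : ℕ) - S B k := congrArg Fin.val hxy
    have : τ (x : α) = τ (y : α) := Fin.ext (by omega)
    exact Subtype.ext (τ.injective this)
  let e : ∀ k : Fin p, {y // y ∈ B k} ≃ Fin (B k).card :=
    fun k => Equiv.ofBijective (g k)
      ((Fintype.bijective_iff_injective_and_card _).2 ⟨ginj k, by simp [Fintype.card_coe]⟩)
  refine ⟨e, ?_⟩
  apply Equiv.ext
  intro a
  apply Fin.ext
  have hmem := pidx_mem hu a
  have hs := phiFun_spec hu hsum e a (pidx hu a) hmem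
  have hb := hτ (pidx hu a) a hmem
  have he : (e (pidx hu a) ⟨a, hmem⟩ : ℕ) = (τ a : ℕ) - S B (pidx hu a) := rfl
  change (phiFun hu hsum e a : ℕ) = _
  omega

lemma card_good (hu : ∀ a : α, ∃! k, a ∈ B k)
    (hsum : ∑ l, (B l).card = Fintype.card α) :
    (Good B).card = ∏ k, (B k).card.factorial := by
  classical
  have himg : Good B = Finset.univ.image (phi hu hsum) := by
    ext τ
    simp only [Finset.mem_image, Finset.mem_univ, true_and]
    constructor
    · exact good_in_range hu hsum
    · rintro ⟨e, rfl⟩; exact phi_mem_good hu hsum e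
  rw [himg, Finset.card_image_of_injective _ (phi_inj hu hsum), Finset.card_univ,
    Fintype.card_pi]
  refine Finset.prod_congr rfl fun k _ => ?_
  rw [Fintype.card_equiv (Fintype.equivFinOfCardEq (Fintype.card_coe _)), Fintype.card_coe]

lemma good_symm_mem (hu : ∀ a : α, ∃! k, a ∈ B k)
    {τ : α ≃ Fin (Fintype.card α)} (hτ : τ ∈ Good B) {k : Fin p}
    {i : Fin (Fintype.card α)} (h1 : S B k ≤ (i : ℕ)) (h2 : (i : ℕ) < S B k + (B k).card) :
    τ.symm i ∈ B k := by
  simp only [Good, Finset.mem_filter, Finset.mem_univ, true_and] at hτ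
  set a := τ.symm i with ha
  have hmem := pidx_mem hu a
  have hb := hτ (pidx hu a) a hmem
  have hi : τ a = i := τ.apply_symm_apply i
  rw [hi] at hb
  have : pidx hu a = k := by
    by_contra hne
    rcases lt_or_gt_of_ne hne with h | h
    · have := S_mono B h; omega
    · have := S_mono B h; omega
  rw [← this]; exact hmem

end HochbergHirschAux


open HochbergHirschAux

/-- **Hochberg–Hirsch LYM inequality.** If `(A_{j1}, …, A_{jp})`, `j = 1, …, m`, are distinct
weak compositions of an `n`-element set `S` into `p` parts such that for each coordinate `k`
the set of distinct values `{A_{jk}}` is an antichain, then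
`∑_j 1/(n!/(|A_{j1}|! ⋯ |A_{jp}|!)) ≤ 1`. -/
theorem hochberg_hirsch {α : Type*} [Fintype α] [DecidableEq α] (n p : ℕ)
    (hcard : Fintype.card α = n)
    (m : ℕ) (A : Fin m → Fin p → Finset α) (hinj : Function.Injective A)
    (hdisj : ∀ j, ∀ k l : Fin p, k ≠ l → Disjoint (A j k) (A j l))
    (hcover : ∀ j, Finset.univ.biUnion (A j) = (Finset.univ : Finset α))
    (hanti : ∀ k : Fin p, IsAntichain (· ⊆ ·) (Set.range fun j => A j k)) :
    ∑ j, (1 : ℝ) /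
        ((n.factorial : ℝ) / ∏ k, ((A j k).card.factorial : ℝ)) ≤ 1 := by
  classical
  subst hcard
  have hu : ∀ j (a : α), ∃! k, a ∈ A j k := by
    intro j a
    have : a ∈ Finset.univ.biUnion (A j) := by
      rw [hcover j]; exact Finset.mem_univ a
    rcases Finset.mem_biUnion.1 this with ⟨k, _, hk⟩
    refine ⟨k, hk, fun k' hk' => ?_⟩
    by_contra hne
    exact (Finset.disjoint_left.1 (hdisj j k' k hne) hk') hk
  have hsum : ∀ j, ∑ l, (A j l).card = Fintype.card α := by
    intro j
    rw [← Finset.card_biUnion (fun k _ l _ hkl => hdisj j k l hkl), hcover j,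
      Finset.card_univ]
  -- the Good sets are pairwise disjoint
  have hGd : ∀ j j' : Fin m, j ≠ j' → Disjoint (Good (A j)) (Good (A j')) := by
    intro j j' hne
    rw [Finset.disjoint_left]
    intro τ hj hj'
    apply hne
    apply hinj
    have aux : ∀ j1 j2 : Fin m, τ ∈ Good (A j1) → τ ∈ Good (A j2) →
        ∀ k : Fin p, S (A j1) k = S (A j2) k → (A j1 k).card ≤ (A j2 k).card →
        A j1 k ⊆ A j2 k := by
      intro j1 j2 h1 h2 k hS hc a ha
      have hb := (Finset.mem_filter.1 h1).2 k a ha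
      have : τ.symm (τ a) ∈ A j2 k :=
        good_symm_mem (hu j2) h2 (by omega) (by omega)
      simpa using this
    have key : ∀ t : ℕ, ∀ k : Fin p, (k : ℕ) = t → A j k = A j' k := by
      intro t
      induction t using Nat.strong_induction_on with
      | _ t IH =>
        intro k hk
        have hSeq : S (A j) k = S (A j') k := by
          refine Finset.sum_congr rfl fun l hl => ?_
          simp only [Finset.mem_filter, Finset.mem_univ, true_and] at hl
          rw [IH (l : ℕ) (by omega) l rfl]
        by_cases heq : A j k = A j' k
        · exact heq
        rcases le_total (A j k).card (A j' k).card with hc | hc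
        · exact absurd (aux j j' hj hj' k hSeq hc)
            (hanti k ⟨j, rfl⟩ ⟨j', rfl⟩ heq)
        · exact absurd (aux j' j hj' hj k hSeq.symm hc)
            (hanti k ⟨j', rfl⟩ ⟨j, rfl⟩ (Ne.symm heq))
    funext k
    exact key (k : ℕ) k rfl
  have hle : ∑ j, (Good (A j)).card ≤ (Fintype.card α).factorial := by
    rw [← Finset.card_biUnion (fun x _ y _ h => hGd x y h)]
    calc (Finset.univ.biUnion fun j => Good (A j)).card
        ≤ (Finset.univ : Finset (α ≃ Fin (Fintype.card α))).card :=
          Finset.card_le_card (Finset.subset_univ _)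
      _ = (Fintype.card α).factorial := by
          rw [Finset.card_univ, Fintype.card_equiv (Fintype.equivFinOfCardEq rfl)]
  have hcg : ∀ j, (Good (A j)).card = ∏ k, (A j k).card.factorial :=
    fun j => card_good (hu j) (hsum j)
  have hbig : ∑ j, ∏ k, (A j k).card.factorial ≤ (Fintype.card α).factorial := by
    calc ∑ j, ∏ k, (A j k).card.factorial = ∑ j, (Good (A j)).card :=
          Finset.sum_congr rfl fun j _ => (hcg j).symm
      _ ≤ _ := hle
  have hfac : (0 : ℝ) < ((Fintype.card α).factorial : ℝ) := by
    exact_mod_cast Nat.factorial_pos _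
  calc ∑ j, (1 : ℝ) / (((Fintype.card α).factorial : ℝ) / ∏ k, ((A j k).card.factorial : ℝ))
      = ∑ j, (∏ k, ((A j k).card.factorial : ℝ)) / ((Fintype.card α).factorial : ℝ) :=
        Finset.sum_congr rfl fun j _ => one_div_div _ _
    _ = (∑ j, ∏ k, ((A j k).card.factorial : ℝ)) / ((Fintype.card α).factorial : ℝ) := by
        rw [Finset.sum_div]
    _ ≤ 1 := by
        rw [div_le_one hfac]
        exact_mod_cast hbig
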